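/- Let c > 0, p ∈ ℕ. Define A(u) = (c/2)u^2 - u^{p+2}/(p+2) and B(u) = (1/2)(c - u^p)^2. Then E(u,v) = A(u) + B(u)v^2 is a first integral of the planar system u' = v, v' = (-u + p u^{p-1} v^2)/(c - u^p): along any C^1 solution (u(z), v(z)) with c - u(z)^p ≠ 0 for all z, the function z ↦ A(u(z)) + B(u(z)) v(z)^2 is constant. -/

import Mathlib

/-- `E(u,v) = A(u) + B(u)v²` is a first integral of the planar system
`u' = v`, `v' = (-u + p u^{p-1} v²)/(c - uᵖ)`: along any `C¹` solution with
`c - u(z)ᵖ ≠ 0` for all `z`, the quantity `A(u(z)) + B(u(z))v(z)²` is constant. -/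
theorem first_integral_planar (c : ℝ) (hc : 0 < c) (p : ℕ) (hp : 1 ≤ p)
    (u v : ℝ → ℝ) (hreg : ∀ z, c - u z ^ p ≠ 0)
    (hu : ∀ z, HasDerivAt u (v z) z)
    (hv : ∀ z, HasDerivAt v ((-u z + p * u z ^ (p - 1) * (v z) ^ 2) / (c - u z ^ p)) z) :
    ∀ z₁ z₂ : ℝ,
      (c / 2 * u z₁ ^ 2 - u z₁ ^ (p + 2) / (p + 2))
          + (1 / 2) * (c - u z₁ ^ p) ^ 2 * (v z₁) ^ 2
      = (c / 2 * u z₂ ^ 2 - u z₂ ^ (p + 2) / (p + 2))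
          + (1 / 2) * (c - u z₂ ^ p) ^ 2 * (v z₂) ^ 2 := by
  obtain ⟨q, rfl⟩ : ∃ q, p = q + 1 := ⟨p - 1, (Nat.succ_pred_eq_of_pos hp).symm⟩
  set F : ℝ → ℝ := fun z =>
    (c / 2 * u z ^ 2 - u z ^ (q + 1 + 2) / (q + 1 + 2))
      + (1 / 2) * (c - u z ^ (q + 1)) ^ 2 * (v z) ^ 2 with hF
  have key : ∀ z, HasDerivAt F 0 z := by
    intro z
    have h2 : HasDerivAt (fun z => u z ^ 2) ((2 : ℕ) * u z ^ (2 - 1) * v z) z := (hu z).pow 2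
    have h3 : HasDerivAt (fun z => u z ^ (q + 1 + 2))
        (((q + 1 + 2 : ℕ)) * u z ^ (q + 1 + 2 - 1) * v z) z := (hu z).pow _
    have h4 : HasDerivAt (fun z => u z ^ (q + 1))
        (((q + 1 : ℕ)) * u z ^ (q + 1 - 1) * v z) z := (hu z).pow _
    have h5 : HasDerivAt (fun z => (c - u z ^ (q + 1)) ^ 2)
        (((2 : ℕ)) * (c - u z ^ (q + 1)) ^ (2 - 1) *
          (0 - ((q + 1 : ℕ)) * u z ^ (q + 1 - 1) * v z)) z :=
      ((hasDerivAt_const z c).sub h4).pow 2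
    have h6 : HasDerivAt (fun z => (v z) ^ 2)
        ((2 : ℕ) * v z ^ (2 - 1) *
          ((-u z + (q + 1 : ℕ) * u z ^ (q + 1 - 1) * (v z) ^ 2) / (c - u z ^ (q + 1)))) z :=
      (hv z).pow 2
    have hD' := ((h2.const_mul (c / 2)).sub (h3.div_const ((q : ℝ) + 1 + 2))).add
      ((h5.const_mul (1 / 2 : ℝ)).mul h6)
    convert hD' using 1
    · rfl
    · rfl
    · rfl
    have hne := hreg z
    simp only [Nat.add_sub_cancel] at *
    push_cast
    field_simp
    ring
  intro z₁ z₂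
  have hd : Differentiable ℝ F := fun z => (key z).differentiableAt
  have := is_const_of_deriv_eq_zero hd (fun z => (key z).deriv) z₁ z₂
  simpa [hF] using this
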